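/- arXiv:1505.05206 — 3 statements merged into one kernel-verified Lean document; each statement's English description precedes it below -/
import Mathlib

section
/- Let F, G, J be integers with 0 ≤ G ≤ F and 0 ≤ J ≤ F. Then (−1)^J · C(F−J, G−1) · C(F, J−1) = ∑_{m=J}^{F−G+1} (−1)^m · C(F−J+m, G−J+m) · C(F−G+1, m). -/
/-- The generalized binomial coefficient `C(x, k)` for integers `x, k`:
`x(x-1)⋯(x-k+1)/k!` when `k ≥ 0` and `0` when `k < 0`. -/
noncomputable def zchoose (x k : ℤ) : ℤ := if 0 ≤ k then Ring.choose x k.toNat else 0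

lemma zchoose_natCast (a b : ℕ) : zchoose (a : ℤ) (b : ℤ) = (a.choose b : ℤ) := by
  simp [zchoose, Ring.choose_natCast]

lemma zchoose_neg (x k : ℤ) (h : k < 0) : zchoose x k = 0 := by
  simp [zchoose, not_le.mpr h]

lemma finid (jp gp K : ℕ) :
    (gp+K).choose gp * (jp+gp+K+1).choose jp * (gp+K+1)
      = (jp+K).choose jp * ((jp+gp+K+1) * (jp+gp+K).choose (jp+K)) := by
  have h1 : gp ≤ gp + K := by omega
  have h2 : jp ≤ jp+gp+K+1 := by omega
  have h3 : jp ≤ jp+K := by omega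
  have h4 : jp+K ≤ jp+gp+K := by omega
  have key : (((gp+K).choose gp * (jp+gp+K+1).choose jp * (gp+K+1) : ℕ) : ℚ)
      = (((jp+K).choose jp * ((jp+gp+K+1) * (jp+gp+K).choose (jp+K)) : ℕ) : ℚ) := by
    push_cast [Nat.cast_choose ℚ h1, Nat.cast_choose ℚ h2, Nat.cast_choose ℚ h3,
      Nat.cast_choose ℚ h4]
    rw [show gp+K-gp = K by omega, show jp+gp+K+1-jp = gp+K+1 by omega,
      show jp+K-jp = K by omega, show jp+gp+K-(jp+K) = gp by omega]
    rw [show (Nat.factorial (gp+K+1) : ℚ) = (gp+K+1) * Nat.factorial (gp+K) by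
          push_cast [Nat.factorial_succ]; ring,
      show (Nat.factorial (jp+gp+K+1) : ℚ) = (jp+gp+K+1) * Nat.factorial (jp+gp+K) by
          push_cast [Nat.factorial_succ]; ring]
    have f1 : (Nat.factorial (gp+K) : ℚ) ≠ 0 := by positivity
    have f2 : (Nat.factorial jp : ℚ) ≠ 0 := by positivity
    have f3 : (Nat.factorial gp : ℚ) ≠ 0 := by positivity
    have f4 : (Nat.factorial K : ℚ) ≠ 0 := by positivity
    have f5 : (Nat.factorial (jp+gp+K) : ℚ) ≠ 0 := by positivity
    have f6 : (Nat.factorial (jp+K) : ℚ) ≠ 0 := by positivity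
    field_simp
  exact_mod_cast key

lemma small1 (n k : ℕ) (h : k ≤ n) :
    (k+1) * (n+1).choose (k+1) = (n+1) * n.choose k := by
  have := Nat.add_one_mul_choose_eq n k
  rw [this, mul_comm]

lemma small2 (n e : ℕ) : (e+1) * (n+e+1).choose n = (n+e+1) * (n+e).choose n := by
  have h1 := Nat.add_one_mul_choose_eq (n+e) e
  rw [show (n+e).choose e = (n+e).choose n from by
        rw [← Nat.choose_symm (show n ≤ n+e from by omega), show n+e-n = e from by omega]] at h1
  rw [show (n+e+1).choose (e+1) = (n+e+1).choose n from by
        rw [← Nat.choose_symm (show n ≤ n+e+1 from by omega),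
          show n+e+1-n = e+1 from by omega]] at h1
  rw [h1]; ring

lemma id1 (k c e : ℕ) :
    (k+e+2) * ((k+c+2).choose (k+1) * (k+c+e+2).choose (k+c+1))
      = (k+c+1).choose k * ((k+c+e+3) * (k+c+e+2).choose (k+c+1))
        + (k+c+1).choose (k+1) * ((k+c+e+2) * (k+c+e+1).choose (k+c+1)) := by
  have h1 : k+1 ≤ k+c+2 := by omega
  have h2 : k+c+1 ≤ k+c+e+2 := by omega
  have h3 : k ≤ k+c+1 := by omega
  have h4 : k+1 ≤ k+c+1 := by omega
  have h5 : k+c+1 ≤ k+c+e+1 := by omega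
  have key : (((k+e+2) * ((k+c+2).choose (k+1) * (k+c+e+2).choose (k+c+1)) : ℕ) : ℚ)
      = (((k+c+1).choose k * ((k+c+e+3) * (k+c+e+2).choose (k+c+1))
        + (k+c+1).choose (k+1) * ((k+c+e+2) * (k+c+e+1).choose (k+c+1)) : ℕ) : ℚ) := by
    push_cast [Nat.cast_choose ℚ h1, Nat.cast_choose ℚ h2, Nat.cast_choose ℚ h3,
      Nat.cast_choose ℚ h4, Nat.cast_choose ℚ h5]
    simp only [show k+c+1-k = c+1 from by omega, show k+c-k = c from by omega,
      show k+c+e+1-(k+c) = e+1 from by omega, show k+c+e-(k+c) = e from by omega,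
      show k+c+2-(k+1) = c+1 from by omega, show k+c+e+2-(k+c+1) = e+1 from by omega,
      show k+c+1-(k+1) = c from by omega, show k+c+e+1-(k+c+1) = e from by omega]
    rw [show (Nat.factorial (k+c+2) : ℚ) = (k+c+2) * Nat.factorial (k+c+1) by
          push_cast [Nat.factorial_succ]; ring,
      show (Nat.factorial (k+c+e+2) : ℚ) = (k+c+e+2) * Nat.factorial (k+c+e+1) by
          push_cast [Nat.factorial_succ]; ring,
      show (Nat.factorial (k+1) : ℚ) = (k+1) * Nat.factorial k by
          push_cast [Nat.factorial_succ]; ring,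
      show (Nat.factorial (c+1) : ℚ) = (c+1) * Nat.factorial c by
          push_cast [Nat.factorial_succ]; ring,
      show (Nat.factorial (e+1) : ℚ) = (e+1) * Nat.factorial e by
          push_cast [Nat.factorial_succ]; ring]
    have f1 : (Nat.factorial (k+c+1) : ℚ) ≠ 0 := by positivity
    have f2 : (Nat.factorial (k+c+e+1) : ℚ) ≠ 0 := by positivity
    have f3 : (Nat.factorial k : ℚ) ≠ 0 := by positivity
    have f4 : (Nat.factorial c : ℚ) ≠ 0 := by positivity
    have f5 : (Nat.factorial e : ℚ) ≠ 0 := by positivity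
    field_simp
    ring
  exact_mod_cast key

lemma stepid (n k a : ℕ) (hk : k ≤ n) (ha : n+k+1 ≤ a) :
    (a-n) * ((n+1).choose (k+1) * (a-k-1).choose n)
      = n.choose k * ((a-k) * (a-k-1).choose n)
        + n.choose (k+1) * ((a-k-1) * (a-k-2).choose n) := by
  obtain ⟨c, rfl⟩ : ∃ c, n = k + c := ⟨n - k, by omega⟩
  obtain ⟨d, rfl⟩ : ∃ d, a = (k+c)+k+1+d := ⟨a - ((k+c)+k+1), by omega⟩
  rcases d with _ | e
  · -- a = n+k+1
    rw [show k+c+k+1+0-(k+c) = k+1 from by omega, show k+c+k+1+0-k = k+c+1 from by omega]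
    simp only [show k+c+1-1 = k+c from by omega, show k+c+1-2 = k+c-1 from by omega,
      Nat.choose_self, mul_one]
    have hz : (k+c).choose (k+1) * ((k+c) * ((k+c-1).choose (k+c))) = 0 := by
      rcases c with _ | c₀
      · simp [Nat.choose_succ_self]
      · rw [Nat.choose_eq_zero_of_lt (show k+(c₀+1)-1 < k+(c₀+1) from by omega)]
        ring
    rw [hz, add_zero, small1 (k+c) k (by omega)]
    ring
  · -- a = n+k+e+2
    rcases c with _ | c'
    · -- k = n
      simp only [Nat.add_zero, show k+k+1+(e+1)-k = k+e+2 from by omega,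
        show k+e+2-1 = k+e+1 from by omega, show k+e+2-2 = k+e from by omega,
        Nat.choose_self, Nat.choose_succ_self]
      ring
    · have := id1 k c' e
      simp only [show k+(c'+1) = k+c'+1 from by omega,
        show k+c'+1+k+1+(e+1)-(k+c'+1) = k+e+2 from by omega,
        show k+c'+1+k+1+(e+1)-k = k+c'+e+3 from by omega,
        show k+c'+e+3-1 = k+c'+e+2 from by omega,
        show k+c'+e+3-2 = k+c'+e+1 from by omega,
        show k+c'+1+1 = k+c'+2 from by omega]
      exact this

lemma baseid (n a : ℕ) (h : n ≤ a) : (a-n) * a.choose n = a * (a-1).choose n := by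
  obtain ⟨d, rfl⟩ : ∃ d, a = n + d := ⟨a - n, by omega⟩
  rcases d with _ | e
  · rw [show n+0-n = 0 from by omega]
    rcases n with _ | n₀
    · simp
    · rw [Nat.choose_eq_zero_of_lt (show n₀+1+0-1 < n₀+1 from by omega)]
      ring
  · rw [show n+(e+1)-n = e+1 from by omega, show n+(e+1)-1 = n+e from by omega,
      show n+(e+1) = n+e+1 from by omega]
    exact small2 n e

lemma lemA (n a : ℕ) : ∀ k : ℕ, n + k ≤ a →
    ((a - n : ℕ) : ℤ) * ∑ i ∈ Finset.range (k+1),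
        (-1:ℤ)^i * ((n+1).choose i : ℤ) * ((a-i).choose n : ℤ)
      = (-1:ℤ)^k * (n.choose k : ℤ) * ((a-k : ℕ) : ℤ) * (((a-k-1 : ℕ)).choose n : ℤ) := by
  intro k
  induction k with
  | zero =>
    intro hk
    simp only [zero_add, Finset.range_one, Finset.sum_singleton, pow_zero,
      Nat.choose_zero_right, Nat.cast_one, one_mul, mul_one, Nat.sub_zero]
    push_cast
    exact_mod_cast baseid n a (by omega)
  | succ k ih =>
    intro hk
    rw [Finset.sum_range_succ, mul_add, ih (by omega)]
    rw [show a-(k+1) = a-k-1 from by omega, show a-k-1-1 = a-k-2 from by omega]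
    by_cases hkn : k ≤ n
    · have hz : ((a-n : ℕ) : ℤ) * (((n+1).choose (k+1) : ℤ) * ((a-k-1).choose n : ℤ))
          = (n.choose k : ℤ) * (((a-k : ℕ) : ℤ) * ((a-k-1).choose n : ℤ))
            + (n.choose (k+1) : ℤ) * (((a-k-1 : ℕ) : ℤ) * ((a-k-2).choose n : ℤ)) := by
        exact_mod_cast stepid n k a hkn (by omega)
      linear_combination ((-1:ℤ)^(k+1)) * hz
    · rw [Nat.choose_eq_zero_of_lt (show n < k from by omega),
        Nat.choose_eq_zero_of_lt (show n < k+1 from by omega),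
        Nat.choose_eq_zero_of_lt (show n+1 < k+1 from by omega)]
      push_cast
      ring

/-- For integers `F, G, J` with `0 ≤ G ≤ F` and `0 ≤ J ≤ F`,
`(−1)^J · C(F−J, G−1) · C(F, J−1)
  = ∑_{m=J}^{F−G+1} (−1)^m · C(F−J+m, G−J+m) · C(F−G+1, m)`. -/
theorem binomial_identity_23_8_1 (F G J : ℤ) (hG0 : 0 ≤ G) (hGF : G ≤ F)
    (hJ0 : 0 ≤ J) (hJF : J ≤ F) :
    (J.negOnePow : ℤ) * zchoose (F - J) (G - 1) * zchoose F (J - 1)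
      = ∑ m ∈ Finset.Icc J (F - G + 1),
          (m.negOnePow : ℤ) * zchoose (F - J + m) (G - J + m) * zchoose (F - G + 1) m := by
  have hF0 : 0 ≤ F := le_trans hG0 hGF
  lift F to ℕ using hF0 with f
  lift G to ℕ using hG0 with g
  lift J to ℕ using hJ0 with j
  have hgf : g ≤ f := by exact_mod_cast hGF
  have hjf : j ≤ f := by exact_mod_cast hJF
  by_cases hcase : (j : ℤ) ≤ (f : ℤ) - g + 1
  swap
  · -- empty sum case
    rw [Finset.Icc_eq_empty (by omega), Finset.sum_empty]
    have hg1 : (2 : ℤ) ≤ g := by omega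
    rw [show (f:ℤ) - j = ((f - j : ℕ) : ℤ) from by omega,
      show (g:ℤ) - 1 = ((g - 1 : ℕ) : ℤ) from by omega,
      zchoose_natCast, Nat.choose_eq_zero_of_lt (by omega)]
    push_cast
    ring
  · -- main case
    set n : ℕ := f - g with hn
    set K : ℕ := f - g + 1 - j with hKdef
    have hjn : j ≤ n + 1 := by omega
    have hK : (K : ℤ) = (f : ℤ) - g + 1 - j := by omega
    set a : ℕ := f + K with ha
    -- reindex the sum
    have hset : Finset.Icc (j : ℤ) ((f:ℤ) - g + 1)
        = (Finset.range (K+1)).map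
            ⟨fun i : ℕ => ((f:ℤ) - g + 1) - i, sub_right_injective.comp Nat.cast_injective⟩ := by
      ext m
      simp only [Finset.mem_Icc, Finset.mem_map, Finset.mem_range,
        Function.Embedding.coeFn_mk]
      constructor
      · rintro ⟨h1, h2⟩
        exact ⟨((f:ℤ) - g + 1 - m).toNat, by omega, by omega⟩
      · rintro ⟨i, hi, rfl⟩
        omega
    rw [hset, Finset.sum_map]
    simp only [Function.Embedding.coeFn_mk]
    have hterm : ∀ i ∈ Finset.range (K+1),
        (Int.negOnePow ((f:ℤ) - g + 1 - i) : ℤ)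
            * zchoose ((f:ℤ) - j + ((f:ℤ) - g + 1 - i)) ((g:ℤ) - j + ((f:ℤ) - g + 1 - i))
            * zchoose ((f:ℤ) - g + 1) ((f:ℤ) - g + 1 - i)
          = (-1:ℤ)^(n+1) * ((-1:ℤ)^i * ((n+1).choose i : ℤ) * ((a-i).choose n : ℤ)) := by
      intro i hi
      rw [Finset.mem_range] at hi
      have hiK : i ≤ K := by omega
      rw [show (f:ℤ) - j + ((f:ℤ) - g + 1 - i) = ((a - i : ℕ) : ℤ) from by omega,
        show (g:ℤ) - j + ((f:ℤ) - g + 1 - i) = ((g + (K - i) : ℕ) : ℤ) from by omega,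
        show (f:ℤ) - g + 1 - (i:ℤ) = ((n + 1 - i : ℕ) : ℤ) from by omega,
        show (f:ℤ) - g + 1 = ((n + 1 : ℕ) : ℤ) from by omega,
        zchoose_natCast, zchoose_natCast, Int.coe_negOnePow_natCast]
      rw [show g + (K - i) = (a - i) - n from by omega,
        Nat.choose_symm (show n ≤ a - i from by omega),
        show (n+1).choose (n+1-i) = (n+1).choose i from
          Nat.choose_symm (show i ≤ n+1 from by omega)]
      have h2 : (-1:ℤ)^(n+1-i) * (-1:ℤ)^i = (-1:ℤ)^(n+1) := by
        rw [← pow_add, show n+1-i+i = n+1 from by omega]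
      have h3 : (-1:ℤ)^i * (-1:ℤ)^i = 1 := by
        rw [← pow_add, ← two_mul, pow_mul]; norm_num
      have h4 : (-1:ℤ)^(n+1-i) = (-1:ℤ)^(n+1) * (-1:ℤ)^i := by
        calc (-1:ℤ)^(n+1-i) = (-1:ℤ)^(n+1-i) * ((-1:ℤ)^i * (-1:ℤ)^i) := by
              rw [h3, mul_one]
          _ = ((-1:ℤ)^(n+1-i) * (-1:ℤ)^i) * (-1:ℤ)^i := by ring
          _ = (-1:ℤ)^(n+1) * (-1:ℤ)^i := by rw [h2]
      rw [h4]
      ring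
    rw [Finset.sum_congr rfl hterm, ← Finset.mul_sum]
    -- apply lemA
    have hA := lemA n a K (by omega)
    have hc : ((g + K : ℕ) : ℤ) ≠ 0 := by
      have : 1 ≤ g + K := by omega
      exact_mod_cast Nat.cast_pos.mpr this |>.ne'
    refine mul_left_cancel₀ hc ?_
    rw [show ((g + K : ℕ) : ℤ) = ((a - n : ℕ) : ℤ) from by omega]
    rw [mul_left_comm ((a - n : ℕ) : ℤ) ((-1:ℤ)^(n+1)), hA]
    rw [show a - K = f from by omega]
    rw [show ((a - n : ℕ) : ℤ) = ((g + K : ℕ) : ℤ) from by omega]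
    -- now a pure identity
    have hsign : (-1:ℤ)^(n+1) * (-1:ℤ)^K = (-1:ℤ)^j := by
      rw [← pow_add, show n+1+K = j + 2*K from by omega, pow_add, pow_mul]
      norm_num
    have hnegj : (Int.negOnePow (j:ℤ) : ℤ) = (-1:ℤ)^j := Int.coe_negOnePow_natCast j
    rw [hnegj]
    have main : ((g + K : ℕ) : ℤ) * (zchoose ((f:ℤ) - j) ((g:ℤ) - 1) * zchoose (f:ℤ) ((j:ℤ) - 1))
        = (n.choose K : ℤ) * ((f : ℤ) * ((f-1 : ℕ).choose n : ℤ)) := by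
      rcases Nat.eq_zero_or_pos j with hj0 | hj1
      · subst hj0
        have hz : zchoose (f:ℤ) (((0:ℕ):ℤ) - 1) = 0 := by
          apply zchoose_neg
          norm_num
        rw [hz, show K = n + 1 from by omega,
          Nat.choose_eq_zero_of_lt (Nat.lt_succ_self n)]
        push_cast
        ring
      · rcases Nat.eq_zero_or_pos g with hg0 | hg1
        · -- g = 0
          rw [show (g:ℤ) - 1 = -1 from by omega, zchoose_neg _ _ (by norm_num)]
          have hf1 : 1 ≤ f := by omega
          rw [Nat.choose_eq_zero_of_lt (show f - 1 < n from by omega)]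
          push_cast
          ring
        · -- j ≥ 1, g ≥ 1
          rw [show (f:ℤ) - j = ((f - j : ℕ) : ℤ) from by omega,
            show (g:ℤ) - 1 = ((g - 1 : ℕ) : ℤ) from by omega,
            show (j:ℤ) - 1 = ((j - 1 : ℕ) : ℤ) from by omega,
            show (f:ℤ) = ((f:ℕ) : ℤ) from rfl,
            zchoose_natCast, zchoose_natCast]
          have h := finid (j-1) (g-1) K
          rw [show j-1+(g-1)+K+1 = f from by omega, show g-1+K+1 = g+K from by omega,
            show g-1+K = f - j from by omega, show j-1+(g-1)+K = f-1 from by omega,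
            show j-1+K = n from by omega] at h
          have hsymm : n.choose K = n.choose (j-1) := by
            rw [show K = n - (j-1) from by omega, Nat.choose_symm (by omega)]
          rw [hsymm]
          zify at h
          push_cast
          linear_combination h
    linear_combination ((-1:ℤ)^j) * main
      - ((n.choose K : ℤ) * (f : ℤ) * ((f-1 : ℕ).choose n : ℤ)) * hsign
end

section
/- Let F, G, J be integers with 0 ≤ G ≤ F and 0 ≤ J ≤ F. Then (−1)^{J−1} · C(F−J, G−1) · C(F, J−1) = ∑_{m=0}^{J−1} (−1)^m · C(F−J+m, G−J+m) · C(F−G+1, m). -/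
lemma zchoose_of_neg {x k : ℤ} (h : k < 0) : zchoose x k = 0 := by
  simp [zchoose, not_le.2 h]

lemma zchoose_zero_right (x : ℤ) : zchoose x 0 = 1 := by
  simp [zchoose, Ring.choose_zero_right]

lemma zchoose_eq (x k : ℤ) (hx : 0 ≤ x) (hk : 0 ≤ k) :
    zchoose x k = (x.toNat.choose k.toNat : ℤ) := by
  rw [zchoose, if_pos hk]
  nth_rw 1 [show x = (x.toNat : ℤ) by omega]
  rw [Ring.choose_natCast]

lemma zchoose_symm (x r : ℤ) (hx : 0 ≤ x) : zchoose x r = zchoose x (x - r) := by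
  rcases lt_or_ge r 0 with hr | hr
  · rw [zchoose_of_neg hr, zchoose_eq x (x - r) hx (by omega),
      Nat.choose_eq_zero_of_lt (by omega), Nat.cast_zero]
  rcases le_or_gt r x with hrx | hrx
  · rw [zchoose_eq x r hx hr, zchoose_eq x (x - r) hx (by omega),
      show (x - r).toNat = x.toNat - r.toNat by omega, Nat.choose_symm (by omega)]
  · rw [zchoose_eq x r hx hr, Nat.choose_eq_zero_of_lt (by omega), Nat.cast_zero,
      zchoose_of_neg (show x - r < 0 by omega)]

open Nat in
lemma natL (a b c : ℕ) :
    (a+b+1).choose a * (a+b+c+3).choose (c+1) + (a+b+1).choose (a+1) * (a+b+c+2).choose c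
    = (a+b+c+2).choose (a+c+1) * (a+c+2).choose (c+1) := by
  have hq : ((a+b+1).choose a * (a+b+c+3).choose (c+1)
      + (a+b+1).choose (a+1) * (a+b+c+2).choose c : ℚ)
      = ((a+b+c+2).choose (a+c+1) * (a+c+2).choose (c+1) : ℚ) := by
    have h1 : ((a+b+1).choose a : ℚ) = (a+b+1)! / (a ! * (b+1)!) := by
      rw [Nat.cast_choose ℚ (show a ≤ a+b+1 by omega), show a+b+1-a = b+1 by omega]
    have h2 : ((a+b+c+3).choose (c+1) : ℚ) = (a+b+c+3)! / ((c+1)! * (a+b+2)!) := by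
      rw [Nat.cast_choose ℚ (show c+1 ≤ a+b+c+3 by omega),
        show a+b+c+3-(c+1) = a+b+2 by omega]
    have h3 : ((a+b+1).choose (a+1) : ℚ) = (a+b+1)! / ((a+1)! * b !) := by
      rw [Nat.cast_choose ℚ (show a+1 ≤ a+b+1 by omega), show a+b+1-(a+1) = b by omega]
    have h4 : ((a+b+c+2).choose c : ℚ) = (a+b+c+2)! / (c ! * (a+b+2)!) := by
      rw [Nat.cast_choose ℚ (show c ≤ a+b+c+2 by omega), show a+b+c+2-c = a+b+2 by omega]
    have h5 : ((a+b+c+2).choose (a+c+1) : ℚ) = (a+b+c+2)! / ((a+c+1)! * (b+1)!) := by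
      rw [Nat.cast_choose ℚ (show a+c+1 ≤ a+b+c+2 by omega),
        show a+b+c+2-(a+c+1) = b+1 by omega]
    have h6 : ((a+c+2).choose (c+1) : ℚ) = (a+c+2)! / ((c+1)! * (a+1)!) := by
      rw [Nat.cast_choose ℚ (show c+1 ≤ a+c+2 by omega), show a+c+2-(c+1) = a+1 by omega]
    have f1 : (a+b+c+3)! = (a+b+c+3) * (a+b+c+2)! := by
      rw [show a+b+c+3 = (a+b+c+2)+1 by omega]; exact Nat.factorial_succ _
    have f2 : (a+b+2)! = (a+b+2) * (a+b+1)! := by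
      rw [show a+b+2 = (a+b+1)+1 by omega]; exact Nat.factorial_succ _
    have f3 : (a+c+2)! = (a+c+2) * (a+c+1)! := by
      rw [show a+c+2 = (a+c+1)+1 by omega]; exact Nat.factorial_succ _
    have f4 : (a+1)! = (a+1) * a ! := Nat.factorial_succ _
    have f5 : (b+1)! = (b+1) * b ! := Nat.factorial_succ _
    have f6 : (c+1)! = (c+1) * c ! := Nat.factorial_succ _
    rw [h1, h2, h3, h4, h5, h6, f1, f2, f3, f4, f5, f6]
    have nA : (a ! : ℚ) ≠ 0 := Nat.cast_ne_zero.2 (Nat.factorial_ne_zero _)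
    have nB : (b ! : ℚ) ≠ 0 := Nat.cast_ne_zero.2 (Nat.factorial_ne_zero _)
    have nC : (c ! : ℚ) ≠ 0 := Nat.cast_ne_zero.2 (Nat.factorial_ne_zero _)
    have nP : ((a+b+1)! : ℚ) ≠ 0 := Nat.cast_ne_zero.2 (Nat.factorial_ne_zero _)
    have nQ : ((a+b+c+2)! : ℚ) ≠ 0 := Nat.cast_ne_zero.2 (Nat.factorial_ne_zero _)
    have nR : ((a+c+1)! : ℚ) ≠ 0 := Nat.cast_ne_zero.2 (Nat.factorial_ne_zero _)
    push_cast
    field_simp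
    ring
  exact_mod_cast hq

lemma intL (n k : ℤ) (hn : 0 ≤ n) (hk : 0 ≤ k) (j : ℕ) :
    zchoose n (k - j) * zchoose (n + j + 1) j
      + zchoose n (k - j + 1) * zchoose (n + j) ((j : ℤ) - 1)
    = zchoose (n + j) k * zchoose (k + 1) j := by
  rcases j with _ | c
  · push_cast
    rw [zchoose_of_neg (show (-1:ℤ) < 0 by norm_num), zchoose_zero_right,
      zchoose_zero_right]
    ring
  · rw [show ((c+1:ℕ):ℤ) = (c:ℤ)+1 by push_cast; ring]
    rcases lt_trichotomy k (c : ℤ) with hc | hc | hc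
    · -- k ≤ c - 1 : everything vanishes
      rw [zchoose_of_neg (show k - ((c:ℤ)+1) < 0 by omega),
        zchoose_of_neg (show k - ((c:ℤ)+1) + 1 < 0 by omega),
        zchoose_eq (k+1) ((c:ℤ)+1) (by omega) (by omega),
        Nat.choose_eq_zero_of_lt (by omega)]
      push_cast; ring
    · -- k = c
      rw [zchoose_of_neg (show k - ((c:ℤ)+1) < 0 by omega),
        show k - ((c:ℤ)+1) + 1 = 0 by omega, zchoose_zero_right,
        show (c:ℤ)+1-1 = k by omega,
        zchoose_eq (k+1) ((c:ℤ)+1) (by omega) (by omega),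
        show (k+1).toNat = c+1 by omega, show ((c:ℤ)+1).toNat = c+1 by omega,
        Nat.choose_self]
      push_cast; ring
    · -- k ≥ c + 1
      rcases lt_trichotomy n (k - (c:ℤ) - 1) with hnk | hnk | hnk
      · -- k - j > n : everything vanishes
        rw [zchoose_eq n (k - ((c:ℤ)+1)) hn (by omega),
          Nat.choose_eq_zero_of_lt (by omega),
          zchoose_eq n (k - ((c:ℤ)+1) + 1) hn (by omega),
          Nat.choose_eq_zero_of_lt (by omega),
          zchoose_eq (n + ((c:ℤ)+1)) k (by omega) hk,
          Nat.choose_eq_zero_of_lt (by omega)]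
        push_cast; ring
      · -- k - j = n
        rw [show k - ((c:ℤ)+1) = n by omega,
          zchoose_eq n n hn hn, Nat.choose_self,
          zchoose_eq n (n+1) hn (by omega), Nat.choose_eq_zero_of_lt (by omega),
          zchoose_eq (n + ((c:ℤ)+1)) k (by omega) hk,
          show k.toNat = (n + ((c:ℤ)+1)).toNat by omega, Nat.choose_self,
          show (k:ℤ) + 1 = n + ((c:ℤ)+1) + 1 by omega]
        push_cast; ring
      · -- in range: reduce to natL
        set a := (k - (c:ℤ) - 1).toNat with ha
        set b := (n - (k - (c:ℤ))).toNat with hb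
        rw [zchoose_eq n (k - ((c:ℤ)+1)) hn (by omega),
          zchoose_eq (n + ((c:ℤ)+1) + 1) ((c:ℤ)+1) (by omega) (by omega),
          zchoose_eq n (k - ((c:ℤ)+1) + 1) hn (by omega),
          zchoose_eq (n + ((c:ℤ)+1)) ((c:ℤ)+1-1) (by omega) (by omega),
          zchoose_eq (n + ((c:ℤ)+1)) k (by omega) hk,
          zchoose_eq (k+1) ((c:ℤ)+1) (by omega) (by omega),
          show n.toNat = a+b+1 by omega,
          show (k - ((c:ℤ)+1)).toNat = a by omega,
          show (n + ((c:ℤ)+1) + 1).toNat = a+b+c+3 by omega,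
          show ((c:ℤ)+1).toNat = c+1 by omega,
          show (k - ((c:ℤ)+1) + 1).toNat = a+1 by omega,
          show (n + ((c:ℤ)+1)).toNat = a+b+c+2 by omega,
          show ((c:ℤ)+1-1).toNat = c by omega,
          show k.toNat = a+c+1 by omega,
          show (k+1).toNat = a+c+2 by omega]
        exact_mod_cast congrArg (Nat.cast : ℕ → ℤ) (natL a b c)

lemma key (n k : ℤ) (hn : 0 ≤ n) (hk : 0 ≤ k) (j : ℕ) :
    ∑ m ∈ Finset.range j, (((m : ℤ)).negOnePow : ℤ) * zchoose (n + m) k * zchoose (k + 1) m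
    = (((j : ℤ) - 1).negOnePow : ℤ) * zchoose n (k - j + 1) * zchoose (n + j) ((j : ℤ) - 1) := by
  induction j with
  | zero =>
      simp only [Finset.range_zero, Finset.sum_empty, Nat.cast_zero]
      rw [zchoose_of_neg (show (0:ℤ) - 1 < 0 by norm_num)]
      ring
  | succ j ih =>
      rw [Finset.sum_range_succ, ih]
      have hc : (((j:ℕ)+1:ℕ):ℤ) = (j:ℤ) + 1 := by push_cast; ring
      rw [hc, show (j:ℤ) + 1 - 1 = (j:ℤ) by ring, show k - ((j:ℤ)+1) + 1 = k - j by ring,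
        show n + ((j:ℤ) + 1) = n + (j:ℤ) + 1 by ring]
      have hneg : ((((j:ℤ) - 1).negOnePow : ℤˣ) : ℤ) = -(((j:ℤ).negOnePow : ℤˣ) : ℤ) := by
        rw [Int.negOnePow_sub, Int.negOnePow_one]
        simp
      rw [hneg]
      linear_combination -(((j:ℤ).negOnePow : ℤˣ) : ℤ) * intL n k hn hk j

/-- For integers `F, G, J` with `0 ≤ G ≤ F` and `0 ≤ J ≤ F`,
`(−1)^{J−1} · C(F−J, G−1) · C(F, J−1)
  = ∑_{m=0}^{J−1} (−1)^m · C(F−J+m, G−J+m) · C(F−G+1, m)`. -/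
theorem binomial_identity_23_9 (F G J : ℤ) (hG0 : 0 ≤ G) (hGF : G ≤ F)
    (hJ0 : 0 ≤ J) (hJF : J ≤ F) :
    ((J - 1).negOnePow : ℤ) * zchoose (F - J) (G - 1) * zchoose F (J - 1)
      = ∑ m ∈ Finset.Icc (0 : ℤ) (J - 1),
          (m.negOnePow : ℤ) * zchoose (F - J + m) (G - J + m) * zchoose (F - G + 1) m := by
  have hn : (0:ℤ) ≤ F - J := by omega
  have hk : (0:ℤ) ≤ F - G := by omega
  have hmap : Finset.Icc (0:ℤ) (J-1)
      = Finset.map ⟨Nat.cast, Nat.cast_injective⟩ (Finset.range J.toNat) := by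
    ext x
    simp only [Finset.mem_Icc, Finset.mem_map, Finset.mem_range,
      Function.Embedding.coeFn_mk]
    constructor
    · rintro ⟨h0, h1⟩; exact ⟨x.toNat, by omega, by omega⟩
    · rintro ⟨i, hi, rfl⟩; omega
  rw [hmap, Finset.sum_map]
  simp only [Function.Embedding.coeFn_mk]
  have hsum : ∀ i ∈ Finset.range J.toNat,
      (((i:ℤ)).negOnePow : ℤ) * zchoose (F - J + i) (G - J + i) * zchoose (F - G + 1) i
      = (((i:ℤ)).negOnePow : ℤ) * zchoose (F - J + i) (F - G) * zchoose (F - G + 1 ) i := by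
    intro i hi
    rw [zchoose_symm (F - J + i) (G - J + i) (by have := Int.natCast_nonneg i; omega),
      show F - J + i - (G - J + i) = F - G by ring]
  rw [Finset.sum_congr rfl hsum, key (F - J) (F - G) hn hk J.toNat,
    Int.toNat_of_nonneg hJ0, show F - J + J = F by ring,
    zchoose_symm (F - J) (G - 1) hn, show F - J - (G - 1) = F - G - J + 1 by ring]
end

section
/- Let g, f be integers with 1 ≤ g < f and set δ = f − g. In the ring ℤ[s, s⁻¹] of Laurent polynomials, the following identity holds: 1 + ∑_{i,j ≥ 0, i+j ≤ δ−1} (−1)^{i+δ} · C(f,i) · C(g+j−1, j) · s^{i+2j+2g−f} = (1−s)^{f−g} · ( ∑_{ℓ=0}^{g−2} C(ℓ+f−g−1, ℓ) · s^ℓ + ∑_{ℓ=0}^{f−g−2} (−1)^{ℓ+δ} · C(g+ℓ−1, ℓ) · s^{ℓ+2g−f} ). -/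
open LaurentPolynomial

section HilbertAux

open Finset

private noncomputable def SS (g d : ℕ) : LaurentPolynomial ℤ :=
  ∑ i ∈ range d, ∑ j ∈ range (d - i),
    C ((-1 : ℤ) ^ (i + d) * ((g + d).choose i) * ((g + j - 1).choose j))
      * T ((i : ℤ) + 2 * j + g - d)

private noncomputable def AA (g d : ℕ) : LaurentPolynomial ℤ :=
  ∑ ℓ ∈ range (g - 1), C (((ℓ + d - 1).choose ℓ : ℤ)) * T (ℓ : ℤ)

private noncomputable def BB (g d : ℕ) : LaurentPolynomial ℤ :=
  ∑ ℓ ∈ range (d - 1), C ((-1 : ℤ) ^ (ℓ + d) * ((g + ℓ - 1).choose ℓ)) * T ((ℓ : ℤ) + g - d)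

private noncomputable def RR (g d : ℕ) : LaurentPolynomial ℤ := (1 - T 1) ^ d * (AA g d + BB g d)

private lemma neg_one_pow_sub {R : Type*} [Ring R] (a b : ℕ) (h : a ≤ b) :
    ((-1 : R)) ^ (b - a) = (-1) ^ (a + b) := by
  obtain ⟨c, rfl⟩ := Nat.exists_eq_add_of_le h
  rw [Nat.add_sub_cancel_left, show a + (a + c) = 2 * a + c by ring, pow_add, pow_mul]
  norm_num

private lemma Tshift (c : ℤ) (e e' : ℤ) (h : e' = 1 + e) :
    T 1 * (C c * T e) = C c * T e' := by
  subst h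
  rw [T_add]
  ring

private lemma CT_congr (a b : ℤ) (e f : ℤ) (h1 : a = b) (h2 : e = f) :
    C a * T e = C b * T f := by
  subst h1 h2
  rfl

private lemma Cadd2 (a b c : ℤ) (e f : ℤ) (h : a = b + c) (he : f = e) :
    C a * T e = C b * T e + C c * T f := by
  subst h he
  rw [map_add]
  ring

private lemma Cadd2' (a b c : ℤ) (e f : ℤ) (h : a = b + c) (he : f = e) :
    C a * T e = C b * T f + C c * T e := by
  subst h he
  rw [map_add]
  ring

private lemma Cneg (a c : ℤ) (t : LaurentPolynomial ℤ) (h : a = c * (-1)) :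
    C a * t = C c * t * (-1) := by
  subst h
  rw [map_mul, map_neg, map_one]
  ring

private lemma Csplit (a b c : ℤ) (t : LaurentPolynomial ℤ) (h : a = b + c * (-1)) :
    C a * t = C b * t + C c * t * (-1) := by
  subst h
  rw [map_add, map_mul, map_neg, map_one]
  ring

private lemma geom (G : ℕ) :
    (1 : LaurentPolynomial ℤ) - T (G : ℤ) = (1 - T 1) * ∑ ℓ ∈ range G, T (ℓ : ℤ) := by
  induction G with
  | zero => simp
  | succ n ih =>
    rw [sum_range_succ, mul_add, ← ih]
    push_cast
    rw [show ((n : ℤ) + 1) = 1 + (n : ℤ) by ring, T_add]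
    ring

private lemma base1 (G : ℕ) : 1 + SS (G + 1) 1 = RR (G + 1) 1 := by
  have hSS : SS (G + 1) 1 = - T (G : ℤ) := by
    simp [SS]
  have hAA : AA (G + 1) 1 = ∑ ℓ ∈ range G, T (ℓ : ℤ) := by
    simp [AA]
  have hBB : BB (G + 1) 1 = 0 := by
    simp [BB]
  rw [hSS, RR, hAA, hBB, pow_one, add_zero, ← geom]
  ring

private lemma base0 (e : ℕ) : 1 + SS 0 (e + 2) = RR 0 (e + 2) := by
  set d := e + 2 with hd
  have hSS : SS 0 d = ∑ i ∈ range d, C ((-1:ℤ)^(i+d) * (d.choose i)) * T ((i:ℤ) - d) := by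
    rw [SS]
    refine sum_congr rfl fun i hi => ?_
    have hi' : i < d := mem_range.mp hi
    rw [Finset.sum_eq_single_of_mem 0 (mem_range.mpr (by omega))]
    · norm_num
    · intro b _ hb0
      have hz : (0 + b - 1).choose b = 0 := Nat.choose_eq_zero_of_lt (by omega)
      rw [hz]
      norm_num
  have hAA : AA 0 d = 0 := by simp [AA]
  have hBB : BB 0 d = C ((-1:ℤ)^d) * T (-(d:ℤ)) := by
    rw [BB]
    rw [Finset.sum_eq_single_of_mem 0 (mem_range.mpr (by omega))]
    · norm_num
    · intro b _ hb0
      have hz : (0 + b - 1).choose b = 0 := Nat.choose_eq_zero_of_lt (by omega)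
      rw [hz]
      norm_num
  rw [hSS, RR, hAA, hBB, zero_add, ← mul_assoc]
  have h1 : ((1 : LaurentPolynomial ℤ) - T 1)^d * C ((-1:ℤ)^d) = (T 1 + (-1))^d := by
    rw [map_pow, map_neg, map_one, ← mul_pow]
    ring_nf
  rw [h1]
  conv_rhs => rw [add_pow, sum_mul, sum_range_succ]
  have hlast : (T 1:LaurentPolynomial ℤ) ^ d * (-1) ^ (d - d) * ((d.choose d : ℕ) : LaurentPolynomial ℤ) * T (-(d:ℤ)) = 1 := by
    rw [Nat.sub_self, pow_zero, Nat.choose_self, T_pow, mul_one, Nat.cast_one, mul_one, mul_one, ← T_add]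
    simp
  rw [hlast, add_comm]
  congr 1
  refine sum_congr rfl fun k hk => ?_
  have hk' : k ≤ d := (mem_range.mp hk).le
  rw [map_mul, map_pow, map_neg, map_one, T_sub, T_pow, mul_one, neg_one_pow_sub k d hk',
    show ((C ((d.choose k : ℕ) : ℤ)) : LaurentPolynomial ℤ) = ((d.choose k : ℕ) : LaurentPolynomial ℤ) from map_natCast C _]
  ring

private lemma SS_rec (G d : ℕ) :
    SS (G + 1) (d + 1) = SS (G + 1) d - T 1 * SS (G + 1) d + T 1 * SS G (d + 1) := by
  set MM : LaurentPolynomial ℤ := ∑ i ∈ range (d+1), ∑ j ∈ range (d+1-i),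
    C ((-1 : ℤ) ^ (i + d + 1) * ((G + 1 + d).choose i) * ((G + 1 + j - 1).choose j))
      * T ((i : ℤ) + 2 * j + G - d) with hMM
  -- the three "normal form" expansions
  have e3 : SS (G+1) d = ∑ i ∈ range d, ∑ j ∈ range (d-i),
      C ((-1:ℤ)^(i+d) * ((G+1+d).choose i) * ((G+1+j-1).choose j)) * T ((i:ℤ)+2*j+G-d+1) := by
    rw [SS]
    refine sum_congr rfl fun i _ => sum_congr rfl fun j _ => ?_
    congr 1
    push_cast
    ring
  have e1 : SS (G + 1) (d + 1) = (∑ i ∈ range d, ∑ j ∈ range (d - i),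
      (C ((-1:ℤ)^(i+d) * ((G+1+d).choose i) * ((G+1+j-1).choose j)) * T ((i:ℤ) + 2*j + G - d + 1)
       + C ((-1:ℤ)^(i+d+1) * ((G+1+d).choose (i+1)) * ((G+1+j-1).choose j)) * T ((i:ℤ) + 2*j + G - d + 1) * (-1)))
      + ∑ j ∈ range (d+1), C ((-1:ℤ)^(d+1) * ((G+1+j-1).choose j)) * T (2*(j:ℤ) + G - d) := by
    rw [SS, sum_range_succ']
    congr 1
    · refine sum_congr rfl fun i hi => ?_
      have hi' : i < d := mem_range.mp hi
      rw [show d + 1 - (i+1) = d - i from by omega]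
      refine sum_congr rfl fun j hj => ?_
      have hT : ((i+1 : ℕ) : ℤ) + 2*(j:ℤ) + ((G+1 : ℕ) : ℤ) - ((d+1 : ℕ):ℤ) = (i:ℤ) + 2*j + G - d + 1 := by
        push_cast; ring
      rw [show (G+1+(d+1)) = (G+1+d)+1 from rfl, Nat.choose_succ_succ (G+1+d) i, hT]
      refine Csplit _ _ _ _ ?_
      push_cast [Nat.succ_eq_add_one]
      ring
    · refine sum_congr rfl fun j hj => ?_
      rw [Nat.choose_zero_right]
      congr 1
      · congr 1
        push_cast
        ring
      · congr 1
        push_cast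
        ring
  have e2 : MM = (∑ i ∈ range d, ∑ j ∈ range (d - i),
      C ((-1:ℤ)^(i+d+1) * ((G+1+d).choose (i+1)) * ((G+1+j-1).choose j)) * T ((i:ℤ) + 2*j + G - d + 1) * (-1))
      + ∑ j ∈ range (d+1), C ((-1:ℤ)^(d+1) * ((G+1+j-1).choose j)) * T (2*(j:ℤ) + G - d) := by
    rw [hMM, sum_range_succ']
    refine congrArg₂ (· + ·) ?_ ?_
    · refine sum_congr rfl fun i hi => ?_
      rw [show d + 1 - (i+1) = d - i from by omega]
      refine sum_congr rfl fun j hj => ?_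
      rw [show ((i+1:ℕ):ℤ) + 2*(j:ℤ) + G - d = (i:ℤ) + 2*j + G - d + 1 from by push_cast; ring]
      refine Cneg _ _ _ ?_
      push_cast
      ring
    · refine sum_congr rfl fun j hj => ?_
      rw [Nat.choose_zero_right]
      congr 1
      · congr 1
        push_cast
        ring
      · congr 1
        push_cast
        ring
  have claim1 : SS (G + 1) (d + 1) = SS (G + 1) d + MM := by
    rw [e1, e2, e3]
    simp only [Finset.sum_add_distrib]
    ring
  have e4 : T 1 * SS (G+1) d = ∑ i ∈ range d, ∑ j ∈ range (d - i),
      C ((-1:ℤ)^(i+d) * ((G+1+d).choose i) * ((G+1+j-1).choose j)) * T ((i:ℤ) + 2*j + G - d + 2) := by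
    rw [SS, mul_sum]
    refine sum_congr rfl fun i _ => ?_
    rw [mul_sum]
    refine sum_congr rfl fun j _ => ?_
    exact Tshift _ _ _ (by push_cast; ring)
  have e5 : T 1 * SS G (d+1) = ∑ i ∈ range (d+1), ∑ j ∈ range (d+1-i),
      C ((-1:ℤ)^(i+(d+1)) * ((G+1+d).choose i) * ((G+j-1).choose j)) * T ((i:ℤ) + 2*j + G - d) := by
    rw [SS, mul_sum]
    refine sum_congr rfl fun i _ => ?_
    rw [mul_sum]
    refine sum_congr rfl fun j _ => ?_
    rw [show (G+(d+1)) = G+1+d from by omega]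
    exact Tshift _ _ _ (by push_cast; ring)
  have claim2 : MM + T 1 * SS (G+1) d = T 1 * SS G (d+1) := by
    rw [e4, e5, hMM]
    have hext : (∑ i ∈ range d, ∑ j ∈ range (d - i),
        C ((-1:ℤ)^(i+d) * ((G+1+d).choose i) * ((G+1+j-1).choose j)) * T ((i:ℤ) + 2*j + G - d + 2))
        = ∑ i ∈ range (d+1), ∑ j ∈ range (d - i),
        C ((-1:ℤ)^(i+d) * ((G+1+d).choose i) * ((G+1+j-1).choose j)) * T ((i:ℤ) + 2*j + G - d + 2) := by
      rw [sum_range_succ, Nat.sub_self]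
      simp
    rw [hext, ← sum_add_distrib]
    refine sum_congr rfl fun i hi => ?_
    have hi' : i ≤ d := by have := mem_range.mp hi; omega
    rw [show d + 1 - i = (d - i) + 1 from by omega, sum_range_succ', sum_range_succ']
    have h0 : C ((-1:ℤ)^(i+d+1) * ((G+1+d).choose i) * ((G+1+0-1).choose 0)) * T ((i:ℤ) + 2*(0:ℕ) + G - d)
        = C ((-1:ℤ)^(i+(d+1)) * ((G+1+d).choose i) * ((G+0-1).choose 0)) * T ((i:ℤ) + 2*(0:ℕ) + G - d) := by
      rw [Nat.choose_zero_right, Nat.choose_zero_right]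
      rfl
    have key : (∑ j ∈ range (d-i),
          C ((-1:ℤ)^(i+d+1) * ((G+1+d).choose i) * ((G+1+(j+1)-1).choose (j+1))) * T ((i:ℤ) + 2*((j+1:ℕ):ℤ) + G - d))
        + (∑ j ∈ range (d-i),
          C ((-1:ℤ)^(i+d) * ((G+1+d).choose i) * ((G+1+j-1).choose j)) * T ((i:ℤ) + 2*j + G - d + 2))
        = ∑ j ∈ range (d-i),
          C ((-1:ℤ)^(i+(d+1)) * ((G+1+d).choose i) * ((G+(j+1)-1).choose (j+1))) * T ((i:ℤ) + 2*((j+1:ℕ):ℤ) + G - d) := by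
      rw [← sum_add_distrib]
      refine sum_congr rfl fun j hj => ?_
      rw [show ((i:ℤ) + 2*(j:ℤ) + G - d + 2) = (i:ℤ) + 2*((j+1:ℕ):ℤ) + G - d from by push_cast; ring,
          ← add_mul, ← map_add]
      congr 2
      rw [show (G+1+(j+1)-1) = (G+j)+1 from by omega, show (G+(j+1)-1) = G+j from by omega,
          show (G+1+j-1) = G+j from by omega, Nat.choose_succ_succ (G+j) j]
      push_cast [Nat.succ_eq_add_one]
      ring
    linear_combination key + h0
  rw [claim1]
  linear_combination claim2

private lemma AA_rec (G d : ℕ) : AA (G+1) (d+2) = AA (G+1) (d+1) + T 1 * AA G (d+2) := by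
  cases G with
  | zero => simp [AA]
  | succ m =>
    have a1 : AA (m+2) (d+2) = ∑ ℓ ∈ range (m+1), C (((ℓ+d+1).choose ℓ : ℤ)) * T (ℓ : ℤ) := by
      rw [AA, show m+2-1 = m+1 from by omega]
      exact sum_congr rfl fun ℓ _ =>
        CT_congr _ _ _ _ (by rw [show ℓ+(d+2)-1 = ℓ+d+1 from by omega]) rfl
    have a2 : AA (m+2) (d+1) = ∑ ℓ ∈ range (m+1), C (((ℓ+d).choose ℓ : ℤ)) * T (ℓ : ℤ) := by
      rw [AA, show m+2-1 = m+1 from by omega]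
      exact sum_congr rfl fun ℓ _ =>
        CT_congr _ _ _ _ (by rw [show ℓ+(d+1)-1 = ℓ+d from by omega]) rfl
    have a3 : T 1 * AA (m+1) (d+2) = ∑ ℓ ∈ range m, C (((ℓ+d+1).choose ℓ : ℤ)) * T ((ℓ:ℤ)+1) := by
      rw [AA, show m+1-1 = m from by omega, mul_sum]
      refine sum_congr rfl fun ℓ _ => ?_
      rw [show ℓ+(d+2)-1 = ℓ+d+1 from by omega]
      exact Tshift _ _ _ (by push_cast; ring)
    rw [a1, a2, a3, sum_range_succ', sum_range_succ']
    have h00 : (C (((0+d+1).choose 0 : ℤ)) * T ((0:ℕ) : ℤ) : LaurentPolynomial ℤ)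
        = C (((0+d).choose 0 : ℤ)) * T ((0:ℕ) : ℤ) := by
      norm_num
    have hkey : ∑ ℓ ∈ range m, C ((((ℓ+1)+d+1).choose (ℓ+1) : ℤ)) * T ((ℓ+1 : ℕ) : ℤ)
        = ∑ ℓ ∈ range m, (C ((((ℓ+1)+d).choose (ℓ+1) : ℤ)) * T ((ℓ+1 : ℕ) : ℤ)
            + C (((ℓ+d+1).choose ℓ : ℤ)) * T ((ℓ:ℤ)+1)) := by
      refine sum_congr rfl fun ℓ _ => ?_
      refine Cadd2 _ _ _ _ _ ?_ (by push_cast; ring)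
      rw [show ℓ+1+d+1 = (ℓ+d+1)+1 from by omega, show ℓ+1+d = ℓ+d+1 from by omega,
        Nat.choose_succ_succ]
      push_cast
      ring
    rw [hkey, h00, sum_add_distrib]
    ring

private lemma BB_rec (G d : ℕ) : BB (G+1) (d+2) = BB (G+1) (d+1) + T 1 * BB G (d+2) := by
  have b1 : BB (G+1) (d+2) = ∑ ℓ ∈ range (d+1),
      C ((-1:ℤ)^(ℓ+d) * ((G+1+ℓ-1).choose ℓ)) * T ((ℓ:ℤ) + G - d - 1) := by
    rw [BB, show d+2-1 = d+1 from by omega]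
    exact sum_congr rfl fun ℓ _ =>
      CT_congr _ _ _ _ (by push_cast; ring) (by push_cast; ring)
  have b2 : BB (G+1) (d+1) = ∑ ℓ ∈ range d,
      C ((-1:ℤ)^(ℓ+d+1) * ((G+1+ℓ-1).choose ℓ)) * T ((ℓ:ℤ) + G - d) := by
    rw [BB, show d+1-1 = d from by omega]
    exact sum_congr rfl fun ℓ _ =>
      CT_congr _ _ _ _ (by push_cast; ring) (by push_cast; ring)
  have b3 : T 1 * BB G (d+2) = ∑ ℓ ∈ range (d+1),
      C ((-1:ℤ)^(ℓ+d) * ((G+ℓ-1).choose ℓ)) * T ((ℓ:ℤ) + G - d - 1) := by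
    rw [BB, show d+2-1 = d+1 from by omega, mul_sum]
    refine sum_congr rfl fun ℓ _ => ?_
    rw [show ((-1:ℤ))^(ℓ+(d+2)) = (-1)^(ℓ+d) from by ring]
    exact Tshift _ _ _ (by push_cast; ring)
  rw [b1, b2, b3, sum_range_succ', sum_range_succ']
  have h00 : (C ((-1:ℤ)^(0+d) * ((G+1+0-1).choose 0)) * T (((0:ℕ):ℤ) + G - d - 1) : LaurentPolynomial ℤ)
      = C ((-1:ℤ)^(0+d) * ((G+0-1).choose 0)) * T (((0:ℕ):ℤ) + G - d - 1) := by
    rw [Nat.choose_zero_right, Nat.choose_zero_right]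
  have hkey : ∑ ℓ ∈ range d,
      C ((-1:ℤ)^((ℓ+1)+d) * ((G+1+(ℓ+1)-1).choose (ℓ+1))) * T (((ℓ+1:ℕ):ℤ) + G - d - 1)
      = ∑ ℓ ∈ range d,
        (C ((-1:ℤ)^(ℓ+d+1) * ((G+1+ℓ-1).choose ℓ)) * T ((ℓ:ℤ) + G - d)
          + C ((-1:ℤ)^((ℓ+1)+d) * ((G+(ℓ+1)-1).choose (ℓ+1))) * T (((ℓ+1:ℕ):ℤ) + G - d - 1)) := by
    refine sum_congr rfl fun ℓ _ => ?_
    refine Cadd2' _ _ _ _ _ ?_ (by push_cast; ring)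
    rw [show G+1+(ℓ+1)-1 = (G+ℓ)+1 from by omega, show G+1+ℓ-1 = G+ℓ from by omega,
      show G+(ℓ+1)-1 = G+ℓ from by omega, Nat.choose_succ_succ]
    push_cast
    ring
  rw [hkey, h00, sum_add_distrib]
  ring

private lemma RR_rec (G d : ℕ) : RR (G+1) (d+2) = (1 - T 1) * RR (G+1) (d+1) + T 1 * RR G (d+2) := by
  rw [RR, RR, RR, AA_rec, BB_rec]
  ring

private lemma master : ∀ N g d : ℕ, g + d ≤ N → 1 ≤ d → (g = 0 → 2 ≤ d) →
    1 + SS g d = RR g d := by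
  intro N
  induction N with
  | zero => intro g d h h1 _; omega
  | succ N ih =>
    intro g d h h1 h0
    rcases d with _ | _ | e
    · omega
    · rcases g with _ | G
      · exact absurd (h0 rfl) (by omega)
      · exact base1 G
    · rcases g with _ | G
      · exact base0 e
      · have I1 := ih (G+1) (e+1) (by omega) (by omega) (by omega)
        have I2 := ih G (e+2) (by omega) (by omega) (by omega)
        calc 1 + SS (G+1) (e+2)
            = (1 - T 1) * (1 + SS (G+1) (e+1)) + T 1 * (1 + SS G (e+2)) := by
              rw [show SS (G+1) (e+2) = SS (G+1) (e+1) - T 1 * SS (G+1) (e+1) + T 1 * SS G (e+2)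
                from SS_rec G (e+1)]
              ring
          _ = (1 - T 1) * RR (G+1) (e+1) + T 1 * RR G (e+2) := by rw [I1, I2]
          _ = RR (G+1) (e+2) := (RR_rec G e).symm

end HilbertAux

/-- For `1 ≤ g < f` with `δ = f − g`, in the Laurent polynomial ring `ℤ[s, s⁻¹]`:
`1 + ∑_{i,j ≥ 0, i+j ≤ δ−1} (−1)^{i+δ} · C(f,i) · C(g+j−1, j) · s^{i+2j+2g−f}
  = (1−s)^{f−g} · (∑_{ℓ=0}^{g−2} C(ℓ+f−g−1, ℓ) · s^ℓ
      + ∑_{ℓ=0}^{f−g−2} (−1)^{ℓ+δ} · C(g+ℓ−1, ℓ) · s^{ℓ+2g−f})`. -/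
theorem hilbert_numerator_identity (g f : ℕ) (h1 : 1 ≤ g) (h2 : g < f)
    (δ : ℕ) (hδ : δ = f - g) :
    (1 : LaurentPolynomial ℤ)
      + ∑ i ∈ Finset.range δ, ∑ j ∈ Finset.range (δ - i),
          C ((-1 : ℤ) ^ (i + δ) * (f.choose i) * ((g + j - 1).choose j))
            * T ((i : ℤ) + 2 * j + 2 * g - f)
      = (1 - T 1) ^ (f - g) *
          ((∑ ℓ ∈ Finset.range (g - 1), C (((ℓ + f - g - 1).choose ℓ : ℤ)) * T (ℓ : ℤ))
            + ∑ ℓ ∈ Finset.range (f - g - 1),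
                C ((-1 : ℤ) ^ (ℓ + δ) * ((g + ℓ - 1).choose ℓ)) * T ((ℓ : ℤ) + 2 * g - f)) := by
  have hf : f = g + δ := by omega
  subst hf
  rw [show g + δ - g = δ from by omega]
  have hL : (∑ i ∈ Finset.range δ, ∑ j ∈ Finset.range (δ - i),
      C ((-1 : ℤ) ^ (i + δ) * ((g + δ).choose i) * ((g + j - 1).choose j))
        * T ((i : ℤ) + 2 * j + 2 * g - ((g + δ : ℕ) : ℤ))) = SS g δ := by
    rw [SS]
    exact Finset.sum_congr rfl fun i _ => Finset.sum_congr rfl fun j _ =>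
      CT_congr _ _ _ _ rfl (by push_cast; ring)
  have hA : (∑ ℓ ∈ Finset.range (g - 1),
      C (((ℓ + (g + δ) - g - 1).choose ℓ : ℤ)) * T (ℓ : ℤ)) = AA g δ := by
    rw [AA]
    exact Finset.sum_congr rfl fun ℓ _ =>
      CT_congr _ _ _ _ (by rw [show ℓ + (g + δ) - g - 1 = ℓ + δ - 1 from by omega]) rfl
  have hB : (∑ ℓ ∈ Finset.range (δ - 1),
      C ((-1 : ℤ) ^ (ℓ + δ) * ((g + ℓ - 1).choose ℓ)) * T ((ℓ : ℤ) + 2 * g - ((g + δ : ℕ) : ℤ)))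
      = BB g δ := by
    rw [BB]
    exact Finset.sum_congr rfl fun ℓ _ =>
      CT_congr _ _ _ _ rfl (by push_cast; ring)
  rw [hL, hA, hB, ← RR]
  exact master (g + δ) g δ le_rfl (by omega) (by omega)
end
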